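/- The inverse of the (n-1)×(n-1) lower triangular Toeplitz matrix Q with entries Q[i,j] = c_{i-j+1} for i ≥ j (and 0 otherwise), where c_1 = 1, is again a lower triangular Toeplitz matrix whose (i,j)-entry for i ≥ j equals (-1)^{i+j} m_{i-j}, where m_r denotes the r-th leading principal minor of the Toeplitz matrix M_0 with entries M_0[i,j] = c_{i-j+2} (with m_0 = 1). -/

import Mathlib

open Matrix

/-- The n×n Toeplitz matrix with (i,j)-entry `c (i - j + 2)` (1-based), i.e. first row
`c 2, c 1, 0, ...`. Here 0-based: entry is `c (i + 2 - j)` when `j ≤ i + 1`, else 0. -/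
noncomputable def M0 (c : ℕ → ℂ) (n : ℕ) : Matrix (Fin n) (Fin n) ℂ :=
  fun i j => if (j : ℕ) ≤ (i : ℕ) + 1 then c ((i : ℕ) + 2 - (j : ℕ)) else 0

/-- `pm c r` is the r-th leading principal minor of `M0 c n` (independent of `n ≥ r`);
`pm c 0 = 1`. -/
noncomputable def pm (c : ℕ → ℂ) (r : ℕ) : ℂ := (M0 c r).det

/-- The s×s lower triangular Toeplitz matrix with first column `c 1, c 2, ..., c s`. -/
noncomputable def Qmat (c : ℕ → ℂ) (s : ℕ) : Matrix (Fin s) (Fin s) ℂ :=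
  fun i j => if (j : ℕ) ≤ (i : ℕ) then c ((i : ℕ) + 1 - (j : ℕ)) else 0

lemma pm_zero (c : ℕ → ℂ) : pm c 0 = 1 := by
  simp [pm, Matrix.det_fin_zero]

lemma det_Qmat (c : ℕ → ℂ) (hc1 : c 1 = 1) (s : ℕ) : (Qmat c s).det = 1 := by
  have h : (Qmat c s).BlockTriangular OrderDual.toDual := by
    intro i j hij
    have hij' : (i : ℕ) < (j : ℕ) := hij
    simp only [Qmat]
    rw [if_neg (by omega)]
  rw [Matrix.det_of_lowerTriangular _ h]
  have hd : ∀ i : Fin s, Qmat c s i i = 1 := by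
    intro i
    simp only [Qmat, le_refl, if_true]
    rw [show (i : ℕ) + 1 - (i : ℕ) = 1 by omega, hc1]
  simp [hd]

lemma succAbove_coe {s : ℕ} (i : Fin (s+1)) (a : Fin s) :
    ((i.succAbove a : Fin (s+1)) : ℕ) = if (a : ℕ) < (i : ℕ) then (a : ℕ) else (a : ℕ) + 1 := by
  rcases lt_or_ge (a : ℕ) (i : ℕ) with h | h
  · rw [Fin.succAbove_of_castSucc_lt _ _ (by simpa [Fin.lt_def])]
    simp [h]
  · rw [Fin.succAbove_of_le_castSucc _ _ (by simpa [Fin.le_def])]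
    simp [Nat.not_lt.2 h]

lemma subdet (c : ℕ → ℂ) (hc1 : c 1 = 1) (s : ℕ) (i : Fin (s+1)) :
    ((M0 c (s+1)).submatrix i.succAbove Fin.succ).det = pm c (s - (i : ℕ)) := by
  set k := (i : ℕ) with hk
  have hks : k ≤ s := by omega
  let e : Fin k ⊕ Fin (s - k) ≃ Fin s := finSumFinEquiv.trans (finCongr (by omega))
  have he1 : ∀ x : Fin k, ((e (Sum.inl x)) : ℕ) = (x : ℕ) := by
    intro x; simp [e]
  have he2 : ∀ x : Fin (s - k), ((e (Sum.inr x)) : ℕ) = k + (x : ℕ) := by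
    intro x; simp [e]
  rw [← Matrix.det_submatrix_equiv_self e]
  have hblock : ((M0 c (s+1)).submatrix i.succAbove Fin.succ).submatrix e e
      = Matrix.fromBlocks (Qmat c k) 0
          (Matrix.of fun (x : Fin (s-k)) (y : Fin k) =>
            (M0 c (s+1)) (i.succAbove (e (Sum.inr x))) (Fin.succ (e (Sum.inl y))))
          (M0 c (s-k)) := by
    ext a b
    rcases a with x | x <;> rcases b with y | y
    · simp only [Matrix.submatrix_apply, Matrix.fromBlocks_apply₁₁]
      have hr : ((i.succAbove (e (Sum.inl x))) : ℕ) = (x : ℕ) := by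
        rw [succAbove_coe, he1, if_pos (by omega)]
      simp only [M0, Qmat, hr, Fin.val_succ, he1]
      split_ifs with h1 h2 h2 <;> first | rfl | omega | (congr 1; omega)
    · simp only [Matrix.submatrix_apply, Matrix.fromBlocks_apply₁₂, Matrix.zero_apply]
      have hr : ((i.succAbove (e (Sum.inl x))) : ℕ) = (x : ℕ) := by
        rw [succAbove_coe, he1, if_pos (by omega)]
      simp only [M0, hr, Fin.val_succ, he2]
      rw [if_neg (by omega)]
    · simp only [Matrix.submatrix_apply, Matrix.fromBlocks_apply₂₁, Matrix.of_apply]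
    · simp only [Matrix.submatrix_apply, Matrix.fromBlocks_apply₂₂]
      have hr : ((i.succAbove (e (Sum.inr x))) : ℕ) = k + (x : ℕ) + 1 := by
        rw [succAbove_coe, he2, if_neg (by omega)]
      simp only [M0, hr, Fin.val_succ, he2]
      split_ifs with h1 h2 h2 <;> first | rfl | omega | (congr 1; omega)
  rw [hblock, Matrix.det_fromBlocks_zero₁₂, det_Qmat c hc1, one_mul, pm]

lemma pm_rec (c : ℕ → ℂ) (hc1 : c 1 = 1) (s : ℕ) :
    pm c (s+1) = ∑ i : Fin (s+1), (-1 : ℂ) ^ (i : ℕ) * c ((i : ℕ) + 2) * pm c (s - (i : ℕ)) := by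
  rw [pm, Matrix.det_succ_column_zero]
  refine Finset.sum_congr rfl fun i _ => ?_
  rw [subdet c hc1 s i]
  simp [M0]

lemma key (c : ℕ → ℂ) (hc1 : c 1 = 1) (s : ℕ) :
    ∑ r ∈ Finset.range (s+1), (-1 : ℂ) ^ r * c (s + 1 - r) * pm c r
      = if s = 0 then 1 else 0 := by
  induction s with
  | zero => simp [pm_zero, hc1]
  | succ s _ =>
    rw [Finset.sum_range_succ]
    have hrec := pm_rec c hc1 s
    rw [Fin.sum_univ_eq_sum_range
      (fun i => (-1 : ℂ) ^ i * c (i + 2) * pm c (s - i))] at hrec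
    have h2 : ∑ r ∈ Finset.range (s+1), (-1 : ℂ) ^ r * c (s + 1 + 1 - r) * pm c r
        = (-1 : ℂ) ^ s * pm c (s+1) := by
      rw [hrec, Finset.mul_sum]
      conv_rhs => rw [← Finset.sum_range_reflect]
      refine Finset.sum_congr rfl fun r hr => ?_
      have hrs : r ≤ s := by
        have := Finset.mem_range.mp hr; omega
      have e1 : s + 1 - 1 - r = s - r := by omega
      have e2 : s - (s - r) = r := by omega
      have e3 : (s - r) + 2 = s + 1 + 1 - r := by omega
      rw [e1, e2, e3]
      have hpow : (-1 : ℂ) ^ s * (-1 : ℂ) ^ (s - r) = (-1 : ℂ) ^ r := by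
        rw [← pow_add, show s + (s - r) = 2 * (s - r) + r by omega, pow_add, pow_mul]
        simp
      rw [← hpow]; ring
    rw [h2, show s + 1 + 1 - (s + 1) = 1 by omega, hc1, pow_succ]
    simp

/-- Property 1: `Q⁻¹` is lower triangular Toeplitz with (i,j)-entry `(-1)^(i+j) m_(i-j)`. -/
theorem stmt0 (n : ℕ) (hn : 2 ≤ n) (c : ℕ → ℂ) (hc1 : c 1 = 1) :
    (Qmat c (n - 1))⁻¹ = fun (i j : Fin (n - 1)) =>
      if (j : ℕ) ≤ (i : ℕ)
      then (-1 : ℂ) ^ ((i : ℕ) + (j : ℕ)) * pm c ((i : ℕ) - (j : ℕ))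
      else 0 := by
  apply Matrix.inv_eq_right_inv
  ext i j
  erw [Matrix.mul_apply, Matrix.one_apply]
  have hterm : ∀ k : Fin (n-1),
      Qmat c (n-1) i k *
        (if (j : ℕ) ≤ (k : ℕ)
          then (-1 : ℂ) ^ ((k : ℕ) + (j : ℕ)) * pm c ((k : ℕ) - (j : ℕ)) else 0)
      = (fun k : ℕ => (if k ≤ (i : ℕ) then c ((i : ℕ) + 1 - k) else 0) *
          (if (j : ℕ) ≤ k then (-1 : ℂ) ^ (k + (j : ℕ)) * pm c (k - (j : ℕ)) else 0)) (k : ℕ) :=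
    fun k => rfl
  rw [Finset.sum_congr rfl (fun k _ => hterm k),
    Fin.sum_univ_eq_sum_range (fun k : ℕ => (if k ≤ (i : ℕ) then c ((i : ℕ) + 1 - k) else 0) *
      (if (j : ℕ) ≤ k then (-1 : ℂ) ^ (k + (j : ℕ)) * pm c (k - (j : ℕ)) else 0)) (n-1)]
  set f : ℕ → ℂ := fun k => (if k ≤ (i : ℕ) then c ((i : ℕ) + 1 - k) else 0) *
          (if (j : ℕ) ≤ k then (-1 : ℂ) ^ (k + (j : ℕ)) * pm c (k - (j : ℕ)) else 0) with hf
  by_cases hij : (j : ℕ) ≤ (i : ℕ)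
  · have hsub : Finset.Icc (j : ℕ) (i : ℕ) ⊆ Finset.range (n-1) := by
      intro x hx
      simp only [Finset.mem_Icc] at hx
      simp only [Finset.mem_range]
      have := i.isLt; omega
    have hzero : ∀ x ∈ Finset.range (n-1), x ∉ Finset.Icc (j : ℕ) (i : ℕ) → f x = 0 := by
      intro x _ hx
      simp only [Finset.mem_Icc, not_and_or, not_le] at hx
      rcases hx with h | h
      · rw [hf]; simp only
        rw [if_neg (show ¬ (j : ℕ) ≤ x by omega), mul_zero]
      · rw [hf]; simp only
        rw [if_neg (show ¬ x ≤ (i : ℕ) by omega), zero_mul]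
    rw [← Finset.sum_subset hsub hzero, ← Finset.Ico_add_one_right_eq_Icc, Finset.sum_Ico_eq_sum_range]
    set s := (i : ℕ) - (j : ℕ) with hs
    rw [show (i : ℕ) + 1 - (j : ℕ) = s + 1 by omega]
    have hcong : ∀ r ∈ Finset.range (s+1),
        f ((j : ℕ) + r) = (-1 : ℂ) ^ r * c (s + 1 - r) * pm c r := by
      intro r hr
      have hrs : r ≤ s := by have := Finset.mem_range.mp hr; omega
      rw [hf]; simp only
      rw [if_pos (by omega), if_pos (by omega),
        show (i : ℕ) + 1 - ((j : ℕ) + r) = s + 1 - r by omega,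
        show (j : ℕ) + r - (j : ℕ) = r by omega,
        show (j : ℕ) + r + (j : ℕ) = 2 * (j : ℕ) + r by omega, pow_add, pow_mul]
      simp; ring
    rw [Finset.sum_congr rfl hcong, key c hc1 s]
    by_cases hij2 : i = j
    · rw [if_pos hij2, if_pos (by rw [hs, hij2]; omega)]
    · rw [if_neg hij2, if_neg (by
        intro h
        exact hij2 (Fin.ext (by omega)))]
  · have hz : ∀ x ∈ Finset.range (n-1), f x = 0 := by
      intro x _
      rw [hf]; simp only
      by_cases h : x ≤ (i : ℕ)
      · rw [if_neg (show ¬ (j : ℕ) ≤ x by omega), mul_zero]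
      · rw [if_neg (show ¬ x ≤ (i : ℕ) from h), zero_mul]
    rw [Finset.sum_eq_zero hz, if_neg (by
      intro h; exact hij (by rw [h]))]
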